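/- Let n ≥ 1, let V ⊆ ℝⁿ be open, convex and nonempty, and let f : ℝⁿ → ℝ be analytic on V (analytic in a neighborhood of each point of V). If f is not identically zero on V, then the set N = {x ∈ V : f(x) = 0} has Lebesgue measure zero. -/

import Mathlib

open MeasureTheory

open Filter Metric Set


lemma aux_fderiv_zero {n : ℕ} {F : Type*} [NormedAddCommGroup F] [NormedSpace ℝ F]
    {s : Set (EuclideanSpace ℝ (Fin n))} {g : EuclideanSpace ℝ (Fin n) → F}
    {x : EuclideanSpace ℝ (Fin n)} {D : EuclideanSpace ℝ (Fin n) →L[ℝ] F}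
    (hd : HasFDerivAt g D x) (hs : ∀ y ∈ s, g y = 0) (hx : g x = 0)
    (hdens : Filter.Tendsto (fun r => volume (s ∩ closedBall x r) / volume (closedBall x r))
      (nhdsWithin 0 (Set.Ioi 0)) (nhds 1)) :
    D = 0 := by
  ext v
  rcases eq_or_ne v 0 with rfl | hv
  · simp
  have hvn : 0 < ‖v‖ := norm_pos_iff.mpr hv
  set C : ℝ := (2 + ‖D‖) * ‖v‖ with hC
  have hCpos : 0 < C := by positivity
  -- main estimate
  have key : ∀ ε : ℝ, 0 < ε → ε ≤ 1 → ‖D v‖ ≤ ε * C := by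
    intro ε hε hε1
    -- little-o bound
    have hlo : ∀ᶠ y in nhds x, ‖g y - g x - D (y - x)‖ ≤ ε * ‖y - x‖ :=
      hd.isLittleO.def hε
    obtain ⟨δ, hδ, hδ'⟩ := Metric.eventually_nhds_iff.mp hlo
    set d := Module.finrank ℝ (EuclideanSpace ℝ (Fin n)) with hd'
    set c : ENNReal := ENNReal.ofReal ((ε / (1 + ε)) ^ d) with hc'
    have hc0 : 0 < c := ENNReal.ofReal_pos.mpr (by positivity)
    have hlt : (1 : ENNReal) - c < 1 :=
      ENNReal.sub_lt_self ENNReal.one_ne_top one_ne_zero hc0.ne'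
    have hev : ∀ᶠ t in nhdsWithin (0:ℝ) (Set.Ioi 0),
        (1:ENNReal) - c < volume (s ∩ closedBall x t) / volume (closedBall x t) :=
      hdens.eventually (eventually_gt_nhds hlt)
    have hsmall : ∀ᶠ t in nhdsWithin (0:ℝ) (Set.Ioi 0), t ∈ Set.Ioo 0 δ :=
      Ioo_mem_nhdsGT_of_mem ⟨le_refl 0, hδ⟩
    obtain ⟨t, hrt, ht⟩ := (hev.and hsmall).exists
    set ρ : ℝ := t / ((1 + ε) * ‖v‖) with hρ'
    have hρ : 0 < ρ := div_pos ht.1 (by positivity)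
    have htρ : t = (1 + ε) * ρ * ‖v‖ := by rw [hρ']; field_simp
    have hsub : closedBall (x + ρ • v) (ε * ρ * ‖v‖) ⊆ closedBall x t := by
      intro y hy
      rw [mem_closedBall] at hy ⊢
      have h1 : dist y x ≤ dist y (x + ρ • v) + dist (x + ρ • v) x := dist_triangle _ _ _
      have h2 : dist (x + ρ • v) x = ρ * ‖v‖ := by
        rw [dist_eq_norm]
        simp [norm_smul, abs_of_pos hρ]
      rw [htρ]; nlinarith
    have hne : (s ∩ closedBall (x + ρ • v) (ε * ρ * ‖v‖)).Nonempty := by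
      by_contra hcon
      rw [Set.not_nonempty_iff_eq_empty] at hcon
      have hsub2 : s ∩ closedBall x t ⊆
          closedBall x t \ closedBall (x + ρ • v) (ε * ρ * ‖v‖) := by
        rintro y ⟨hy1, hy2⟩
        exact ⟨hy2, fun hy3 => (Set.eq_empty_iff_forall_notMem.mp hcon y ⟨hy1, hy3⟩)⟩
      have hBt : volume (closedBall x t)
          = ENNReal.ofReal (t ^ d) * volume (ball (0 : EuclideanSpace ℝ (Fin n)) 1) :=
        Measure.addHaar_closedBall _ _ ht.1.le
      have hB' : volume (closedBall (x + ρ • v) (ε * ρ * ‖v‖))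
          = ENNReal.ofReal ((ε * ρ * ‖v‖) ^ d) * volume (ball (0 : EuclideanSpace ℝ (Fin n)) 1) :=
        Measure.addHaar_closedBall _ _ (by positivity)
      have harg : (ε * ρ * ‖v‖) ^ d = (ε / (1 + ε)) ^ d * t ^ d := by
        rw [← mul_pow]
        congr 1
        rw [hρ']; field_simp
      have hcm : volume (closedBall (x + ρ • v) (ε * ρ * ‖v‖)) = c * volume (closedBall x t) := by
        rw [hB', hBt, harg, hc', ENNReal.ofReal_mul (by positivity), mul_assoc]
      have hfin : volume (closedBall x t) ≠ ⊤ := measure_closedBall_lt_top.ne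
      have hfin' : volume (closedBall (x + ρ • v) (ε * ρ * ‖v‖)) ≠ ⊤ := measure_closedBall_lt_top.ne
      have hdiff : volume (closedBall x t \ closedBall (x + ρ • v) (ε * ρ * ‖v‖))
          = volume (closedBall x t) - volume (closedBall (x + ρ • v) (ε * ρ * ‖v‖)) :=
        measure_diff hsub measurableSet_closedBall.nullMeasurableSet hfin'
      have hle : volume (s ∩ closedBall x t) ≤ ((1:ENNReal) - c) * volume (closedBall x t) := by
        calc volume (s ∩ closedBall x t)
            ≤ volume (closedBall x t \ closedBall (x + ρ • v) (ε * ρ * ‖v‖)) := measure_mono hsub2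
          _ = volume (closedBall x t) - c * volume (closedBall x t) := by rw [hdiff, hcm]
          _ = ((1:ENNReal) - c) * volume (closedBall x t) := by
              rw [ENNReal.sub_mul (fun _ _ => hfin), one_mul]
      have : volume (s ∩ closedBall x t) / volume (closedBall x t) ≤ (1:ENNReal) - c :=
        ENNReal.div_le_of_le_mul hle
      exact absurd (lt_of_lt_of_le hrt this) (lt_irrefl _)
    obtain ⟨y, hys, hyB⟩ := hne
    have hyx : ‖y - x‖ ≤ t := by
      have := hsub hyB
      rwa [mem_closedBall, dist_eq_norm] at this
    have hlb := hδ' (show dist y x < δ by rw [dist_eq_norm]; exact lt_of_le_of_lt hyx ht.2)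
    rw [hs y hys, hx] at hlb
    simp only [zero_sub, sub_zero, norm_neg, zero_sub] at hlb
    have h1 : ‖D (y - x)‖ ≤ ε * t := le_trans hlb (by nlinarith)
    have h2 : ‖y - x - ρ • v‖ ≤ ε * ρ * ‖v‖ := by
      rw [mem_closedBall, dist_eq_norm] at hyB
      have : y - (x + ρ • v) = y - x - ρ • v := by abel
      rwa [this] at hyB
    have h3 : ‖D (y - x - ρ • v)‖ ≤ ‖D‖ * (ε * ρ * ‖v‖) :=
      le_trans (D.le_opNorm _) (by
        have := D.opNorm_nonneg
        nlinarith)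
    have h4 : ρ • (D v) = D (y - x) - D (y - x - ρ • v) := by
      rw [← ContinuousLinearMap.map_smul, ← ContinuousLinearMap.map_sub]; congr 1; abel
    have h5 : ρ * ‖D v‖ ≤ ε * t + ‖D‖ * (ε * ρ * ‖v‖) := by
      have : ‖ρ • D v‖ ≤ ‖D (y - x)‖ + ‖D (y - x - ρ • v)‖ := by
        rw [h4]; exact norm_sub_le _ _
      rw [norm_smul, Real.norm_eq_abs, abs_of_pos hρ] at this
      linarith
    rw [htρ] at h5
    have hDn := D.opNorm_nonneg
    have h5' : ρ * ‖D v‖ ≤ ρ * (ε * (1 + ε) * ‖v‖ + ‖D‖ * (ε * ‖v‖)) := by nlinarith [h5]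
    have h6 : ‖D v‖ ≤ ε * (1 + ε) * ‖v‖ + ‖D‖ * (ε * ‖v‖) := le_of_mul_le_mul_left h5' hρ
    rw [hC]
    nlinarith [mul_nonneg (mul_nonneg hε.le hvn.le) (by linarith : (0:ℝ) ≤ 1 - ε)]
  by_contra hDv
  have hpos : 0 < ‖D v‖ := norm_pos_iff.mpr (by simpa using hDv)
  have h1 : ‖D v‖ ≤ min 1 (‖D v‖ / (2 * C)) * C :=
    key _ (lt_min one_pos (by positivity)) (min_le_left _ _)
  have h2 : min 1 (‖D v‖ / (2 * C)) * C ≤ (‖D v‖ / (2 * C)) * C :=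
    mul_le_mul_of_nonneg_right (min_le_right _ _) hCpos.le
  have h3 : (‖D v‖ / (2 * C)) * C = ‖D v‖ / 2 := by field_simp
  linarith

/-- If `V ⊆ ℝⁿ` is open, convex and nonempty and `f : ℝⁿ → ℝ` is analytic at every point
of `V` and not identically zero on `V`, then the zero set of `f` in `V` has Lebesgue
measure zero. -/
theorem stmt7 {n : ℕ} (hn : 1 ≤ n) (V : Set (EuclideanSpace ℝ (Fin n)))
    (hVopen : IsOpen V) (hVconv : Convex ℝ V) (hVne : V.Nonempty)
    (f : EuclideanSpace ℝ (Fin n) → ℝ)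
    (hf : ∀ x ∈ V, AnalyticAt ℝ f x)
    (hnz : ¬ ∀ x ∈ V, f x = 0) :
    volume {x ∈ V | f x = 0} = 0 := by
  classical
  set N : Set (EuclideanSpace ℝ (Fin n)) := {x ∈ V | f x = 0} with hN'
  by_contra h0
  -- f is analytic on a neighborhood of V
  have hfa : AnalyticOnNhd ℝ f V := hf
  -- iterated derivatives
  set g : (k : ℕ) → EuclideanSpace ℝ (Fin n) →
      ContinuousMultilinearMap ℝ (fun _ : Fin k => EuclideanSpace ℝ (Fin n)) ℝ :=
    fun k => iteratedFDeriv ℝ k f with hg'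
  have hga : ∀ k, AnalyticOnNhd ℝ (g k) V := fun k => hfa.iteratedFDeriv k
  -- open subsets where g k doesn't vanish
  have hopen : ∀ k, IsOpen {x ∈ V | g k x ≠ 0} := by
    intro k
    rw [isOpen_iff_mem_nhds]
    rintro x ⟨hxV, hxg⟩
    filter_upwards [hVopen.mem_nhds hxV, (hga k x hxV).continuousAt.eventually_ne hxg]
      with y h1 h2 using ⟨h1, h2⟩
  -- N is measurable
  have hNV : N ⊆ V := fun x hx => hx.1
  have hNmeas : MeasurableSet N := by
    have : N = V \ {x ∈ V | g 0 x ≠ 0} := by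
      ext x
      simp only [hN', Set.mem_setOf_eq, Set.mem_diff, hg']
      constructor
      · rintro ⟨h1, h2⟩
        refine ⟨h1, fun h3 => h3.2 ?_⟩
        ext m
        simp [iteratedFDeriv_zero_apply, h2]
      · rintro ⟨h1, h2⟩
        refine ⟨h1, ?_⟩
        by_contra h3
        exact h2 ⟨h1, fun h4 => h3 (by simpa using congrArg (fun T => T ![]) h4)⟩
    rw [this]
    exact hVopen.measurableSet.diff (hopen 0).measurableSet
  -- key claim: all iterated derivatives vanish a.e. on N
  have claim : ∀ k, volume {x ∈ N | g k x ≠ 0} = 0 := by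
    intro k
    induction k with
    | zero =>
      convert measure_empty
      · ext x
        simp only [Set.mem_setOf_eq, Set.mem_empty_iff_false, iff_false, not_and]
        rintro ⟨hxV, hfx⟩ h
        exact h (by ext m; simp [hg', iteratedFDeriv_zero_apply, hfx])
      · infer_instance
    | succ k ih =>
      set s : Set (EuclideanSpace ℝ (Fin n)) := {x ∈ N | g k x = 0} with hs'
      have hsV : s ⊆ V := fun x hx => hx.1.1
      have hsmeas : MeasurableSet s := by
        have : s = N \ {x ∈ V | g k x ≠ 0} := by
          ext x
          constructor
          · rintro ⟨h1, h2⟩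
            exact ⟨h1, fun h3 => h3.2 h2⟩
          · rintro ⟨h1, h2⟩
            refine ⟨h1, ?_⟩
            by_contra h3
            exact h2 ⟨hNV h1, h3⟩
        rw [this]
        exact hNmeas.diff (hopen k).measurableSet
      have hNs : volume (N \ s) = 0 := by
        apply le_antisymm _ zero_le
        rw [← ih]
        apply measure_mono
        rintro x ⟨h1, h2⟩
        exact ⟨h1, fun h3 => h2 ⟨h1, h3⟩⟩
      -- density points
      -- the set of "bad" points in s
      set T : Set (EuclideanSpace ℝ (Fin n)) := {x | Filter.Tendsto
        (fun r => volume (s ∩ Metric.closedBall x r) / volume (Metric.closedBall x r))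
        (nhdsWithin 0 (Set.Ioi 0)) (nhds 1)} with hT'
      have hbad : volume (Tᶜ ∩ s) = 0 := by
        have := Besicovitch.ae_tendsto_measure_inter_div (volume : Measure (EuclideanSpace ℝ (Fin n))) s
        rw [MeasureTheory.ae_iff] at this
        rw [← Measure.restrict_apply' hsmeas]
        exact this
      -- at good points of s, g (k+1) vanishes
      have hgood : ∀ x ∈ T ∩ s, g (k + 1) x = 0 := by
        rintro x ⟨hxT, hxs⟩
        have hxV : x ∈ V := hsV hxs
        have hdiff : HasFDerivAt (g k) (fderiv ℝ (g k) x) x :=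
          ((hga k x hxV).differentiableAt).hasFDerivAt
        have hfd : fderiv ℝ (g k) x = 0 :=
          aux_fderiv_zero hdiff (fun y hy => hy.2) hxs.2 hxT
        show iteratedFDeriv ℝ (k + 1) f x = 0
        ext m
        rw [iteratedFDeriv_succ_apply_left,
          show fderiv ℝ (iteratedFDeriv ℝ k f) x = fderiv ℝ (g k) x from rfl, hfd]
        simp
      apply le_antisymm _ zero_le
      calc volume {x ∈ N | g (k+1) x ≠ 0}
          ≤ volume ((N \ s) ∪ (Tᶜ ∩ s)) := by
            apply measure_mono
            rintro x ⟨hxN, hxg⟩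
            by_cases hxs : x ∈ s
            · right
              refine ⟨fun hxT => hxg (hgood x ⟨hxT, hxs⟩), hxs⟩
            · left; exact ⟨hxN, hxs⟩
        _ ≤ volume (N \ s) + volume (Tᶜ ∩ s) := measure_union_le _ _
        _ = 0 := by rw [hNs, hbad]; simp
  -- get a point of N where all derivatives vanish
  have hUnion : volume (⋃ k, {x ∈ N | g k x ≠ 0}) = 0 := measure_iUnion_null claim
  have hgoodpt : ({x ∈ N | ∀ k, g k x = 0}).Nonempty := by
    apply nonempty_of_measure_ne_zero (μ := volume)
    intro hzero
    apply h0
    apply le_antisymm _ zero_le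
    have : N ⊆ {x ∈ N | ∀ k, g k x = 0} ∪ ⋃ k, {x ∈ N | g k x ≠ 0} := by
      intro x hx
      by_cases h : ∀ k, g k x = 0
      · exact Or.inl ⟨hx, h⟩
      · push_neg at h
        obtain ⟨k, hk⟩ := h
        exact Or.inr (Set.mem_iUnion.mpr ⟨k, hx, hk⟩)
    calc volume N ≤ volume ({x ∈ N | ∀ k, g k x = 0} ∪ ⋃ k, {x ∈ N | g k x ≠ 0}) :=
          measure_mono this
      _ ≤ volume {x ∈ N | ∀ k, g k x = 0} + volume (⋃ k, {x ∈ N | g k x ≠ 0}) :=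
          measure_union_le _ _
      _ = 0 := by rw [hzero, hUnion]; simp
  obtain ⟨x0, hx0N, hx0g⟩ := hgoodpt
  have hx0V : x0 ∈ V := hNV hx0N
  -- f vanishes in a neighborhood of x0
  obtain ⟨p, r, hp⟩ := hf x0 hx0V
  have hloc : ∀ᶠ z in nhds x0, f z = 0 := by
    filter_upwards [EMetric.ball_mem_nhds x0 hp.r_pos] with z hz
    have hy : z - x0 ∈ Metric.eball (0 : EuclideanSpace ℝ (Fin n)) r := by
      rw [Metric.mem_eball]
      simpa [edist_eq_enorm_sub] using hz
    have hsum := hp.hasSum_iteratedFDeriv hy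
    have : ∀ k, (Nat.factorial k : ℝ)⁻¹ • iteratedFDeriv ℝ k f x0 (fun _ => z - x0) = 0 := by
      intro k
      rw [show iteratedFDeriv ℝ k f x0 = g k x0 from rfl, hx0g k]
      simp
    rw [show x0 + (z - x0) = z by abel] at hsum
    have h00 : HasSum (fun k : ℕ =>
        (Nat.factorial k : ℝ)⁻¹ • (iteratedFDeriv ℝ k f x0 fun _ => z - x0)) 0 := by
      simp only [this]
      exact hasSum_zero
    exact hsum.unique h00
  -- identity theorem
  have := hfa.eqOn_zero_of_preconnected_of_eventuallyEq_zero
    hVconv.isPreconnected hx0V hloc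
  exact hnz fun x hx => this hx
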